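/- In the free associative ℚ(x)-algebra on generators F_1, ..., F_n modulo only the commutation relations F_iF_j = F_jF_i for |i-j| > 1, the elements F_1 Ψ and Ψ F_1 are linearly independent whenever Ψ is a nonzero linear combination of Coxeter monomials in F_2, ..., F_n (n ≥ 2). -/

import Mathlib

/-- The commutation relations defining the algebra generated by `F_1, …, F_n` subject
only to `F_i F_j = F_j F_i` for `|i - j| > 1`.  The generator indexed by `i : Fin n`
stands for `F_{i+1}`. -/
def commRel (K : Type*) [Field K] (n : ℕ) :
    FreeAlgebra K (Fin n) → FreeAlgebra K (Fin n) → Prop := fun a b =>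
  ∃ i j : Fin n, ((i : ℕ) + 1 < (j : ℕ) ∨ (j : ℕ) + 1 < (i : ℕ)) ∧
    a = FreeAlgebra.ι K i * FreeAlgebra.ι K j ∧
    b = FreeAlgebra.ι K j * FreeAlgebra.ι K i

namespace F1PsiAux

/-- The commutation relation on words in the free monoid. -/
def mrel (n : ℕ) : FreeMonoid (Fin n) → FreeMonoid (Fin n) → Prop := fun a b =>
  ∃ i j : Fin n, ((i : ℕ) + 1 < (j : ℕ) ∨ (j : ℕ) + 1 < (i : ℕ)) ∧
    a = FreeMonoid.of i * FreeMonoid.of j ∧ b = FreeMonoid.of j * FreeMonoid.of i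

/-- The congruence generated by the commutation relation. -/
def mcon (n : ℕ) : Con (FreeMonoid (Fin n)) := conGen (mrel n)

/-- The trace monoid. -/
abbrev TM (n : ℕ) := (mcon n).Quotient

/-- The class of a word in the trace monoid. -/
def cls {n : ℕ} (l : List (Fin n)) : TM n := (mcon n).mk' (FreeMonoid.ofList l)

variable {n : ℕ}

theorem cls_append (l l' : List (Fin n)) : cls (l ++ l') = cls l * cls l' := by
  simp only [cls, FreeMonoid.ofList_append, map_mul]

theorem cls_swap {i j : Fin n} (hij : (i : ℕ) + 1 < (j : ℕ) ∨ (j : ℕ) + 1 < (i : ℕ)) :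
    cls [i, j] = cls [j, i] :=
  (Con.eq (mcon n)).2 (ConGen.Rel.of _ _ ⟨i, j, hij, rfl, rfl⟩)

theorem cls_prod (l : List (Fin n)) : (l.map fun i => cls [i]).prod = cls l := by
  induction l with
  | nil => rfl
  | cons a l ih =>
    simp only [List.map_cons, List.prod_cons, ih]
    rw [← cls_append]
    rfl

/-- letter map for the projection to letters `0, 1`. -/
def pm : Fin n → FreeMonoid Bool := fun i =>
  if (i : ℕ) = 0 then FreeMonoid.of true else if (i : ℕ) = 1 then FreeMonoid.of false else 1

/-- ψ : projection to the subword on letters 0,1. -/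
def ψ : TM n →* FreeMonoid Bool :=
  (mcon n).lift (FreeMonoid.lift pm) <| by
    rw [mcon, Con.conGen_le]
    rintro a b ⟨i, j, hij, rfl, rfl⟩
    apply (Con.ker_rel _).2
    simp only [map_mul, FreeMonoid.lift_eval_of]
    have : pm i = 1 ∨ pm j = 1 := by
      unfold pm
      split_ifs <;> simp_all
    rcases this with h | h <;> rw [h] <;> simp

/-- letter map for deleting letter 0. -/
def dm : Fin n → TM n := fun i => if (i : ℕ) = 0 then 1 else cls [i]

/-- d : delete letter 0. -/
def d : TM n →* TM n :=
  (mcon n).lift (FreeMonoid.lift dm) <| by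
    refine (show conGen (mrel n) ≤ _ → mcon n ≤ _ from id) ?_
    rw [Con.conGen_le]
    rintro a b ⟨i, j, hij, rfl, rfl⟩
    apply (Con.ker_rel _).2
    simp only [map_mul, FreeMonoid.lift_eval_of]
    unfold dm
    split_ifs <;> try simp
    rw [← cls_append, ← cls_append]
    exact cls_swap hij

theorem ψ_cls_of_ne (l : List (Fin n)) (hl : ∀ i ∈ l, (i : ℕ) ≠ 0) :
    ψ (cls l) =
      FreeMonoid.ofList
        (List.replicate (List.countP (fun i : Fin n => decide ((i : ℕ) = 1)) l) false) := by
  rw [ψ, cls, Con.lift_mk', FreeMonoid.lift_ofList]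
  induction l with
  | nil => rfl
  | cons a l ih =>
    simp only [List.map_cons, List.prod_cons]
    rw [ih (fun i hi => hl i (List.mem_cons_of_mem a hi))]
    rw [List.countP_cons]
    unfold pm
    rw [if_neg (hl a (List.mem_cons_self))]
    by_cases h1 : (a : ℕ) = 1
    · simp only [if_pos h1, h1]
      norm_num
      rw [List.replicate_succ]
      rfl
    · simp only [if_neg h1, one_mul]
      simp [h1]

theorem ψ_cls_zero (h0 : (0:ℕ) < n) :
    ψ (cls [(⟨0, h0⟩ : Fin n)]) = FreeMonoid.of true := by
  rw [ψ, cls, Con.lift_mk']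
  show FreeMonoid.lift pm (FreeMonoid.of _) = _
  rw [FreeMonoid.lift_eval_of]
  simp [pm]

theorem d_cls_of_ne (l : List (Fin n)) (hl : ∀ i ∈ l, (i : ℕ) ≠ 0) :
    d (cls l) = cls l := by
  rw [d, cls, Con.lift_mk', FreeMonoid.lift_ofList]
  induction l with
  | nil => rfl
  | cons a l ih =>
    simp only [List.map_cons, List.prod_cons]
    rw [ih (fun i hi => hl i (List.mem_cons_of_mem a hi))]
    unfold dm
    rw [if_neg (hl a (List.mem_cons_self))]
    show cls [a] * cls l = cls (a :: l)
    rw [← cls_append]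
    rfl

theorem d_cls_zero (h0 : (0:ℕ) < n) : d (cls [(⟨0, h0⟩ : Fin n)]) = 1 := by
  rw [d, cls, Con.lift_mk']
  show FreeMonoid.lift dm (FreeMonoid.of _) = 1
  rw [FreeMonoid.lift_eval_of]
  simp [dm]

section
variable (K : Type*) [Field K] (n : ℕ)

/-- The map from the quotient algebra to the monoid algebra of the trace monoid. -/
noncomputable def φ : RingQuot (commRel K n) →ₐ[K] MonoidAlgebra K (TM n) :=
  RingQuot.liftAlgHom K ⟨FreeAlgebra.lift K
      (fun i => MonoidAlgebra.of K (TM n) (cls [i])), by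
    rintro a b ⟨i, j, hij, rfl, rfl⟩
    simp only [map_mul, FreeAlgebra.lift_ι_apply]
    rw [← map_mul, ← map_mul]
    congr 1
    rw [← cls_append, ← cls_append]
    exact cls_swap hij⟩

theorem φ_gen (i : Fin n) :
    φ K n (RingQuot.mkAlgHom K (commRel K n) (FreeAlgebra.ι K i)) =
      MonoidAlgebra.single (cls [i]) 1 := by
  rw [φ, RingQuot.liftAlgHom_mkAlgHom_apply]
  simp [FreeAlgebra.lift_ι_apply, MonoidAlgebra.of_apply]

/-- Monoid hom from the trace monoid back to the quotient algebra. -/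
noncomputable def tmHom : TM n →* RingQuot (commRel K n) :=
  (mcon n).lift (FreeMonoid.lift
      (fun i => RingQuot.mkAlgHom K (commRel K n) (FreeAlgebra.ι K i))) <| by
    rw [mcon, Con.conGen_le]
    rintro a b ⟨i, j, hij, rfl, rfl⟩
    apply (Con.ker_rel _).2
    simp only [map_mul, FreeMonoid.lift_eval_of]
    rw [← map_mul, ← map_mul]
    exact RingQuot.mkAlgHom_rel K ⟨i, j, hij, rfl, rfl⟩

/-- The inverse algebra hom. -/
noncomputable def ginv : MonoidAlgebra K (TM n) →ₐ[K] RingQuot (commRel K n) :=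
  MonoidAlgebra.lift K _ (TM n) (tmHom K n)

theorem ginv_φ (x : RingQuot (commRel K n)) : ginv K n (φ K n x) = x := by
  have : (ginv K n).comp (φ K n) = AlgHom.id K _ := by
    apply RingQuot.ringQuot_ext'
    apply FreeAlgebra.hom_ext
    funext i
    simp only [AlgHom.comp_apply, AlgHom.coe_comp, Function.comp_apply, AlgHom.id_comp]
    show ginv K n (φ K n (RingQuot.mkAlgHom K (commRel K n) (FreeAlgebra.ι K i))) = _
    rw [φ_gen]
    simp only [ginv, MonoidAlgebra.lift_single, one_smul, tmHom, cls]
    rw [Con.lift_mk']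
    simp [FreeMonoid.lift_eval_of]
  calc ginv K n (φ K n x) = ((ginv K n).comp (φ K n)) x := rfl
    _ = x := by rw [this]; rfl

theorem φ_inj : Function.Injective (φ K n) :=
  Function.LeftInverse.injective (ginv_φ K n)

variable {G : Type*} [Monoid G] [DecidableEq G]

theorem single_one_mul_apply' (P : MonoidAlgebra K G) (c z : G) :
    (MonoidAlgebra.single c (1 : K) * P).coeff z =
      ∑ x ∈ P.coeff.support, if c * x = z then P.coeff x else 0 := by
  classical
  rw [MonoidAlgebra.coeff_mul, MonoidAlgebra.coeff_single, Finsupp.sum_single_index]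
  · simp only [one_mul]
    rfl
  · simp only [zero_mul, ite_self]
    simp [Finsupp.sum]

theorem mul_single_one_apply' (P : MonoidAlgebra K G) (c z : G) :
    (P * MonoidAlgebra.single c (1 : K)).coeff z =
      ∑ x ∈ P.coeff.support, if x * c = z then P.coeff x else 0 := by
  classical
  rw [MonoidAlgebra.coeff_mul]
  have hsup : (MonoidAlgebra.single c (1 : K)).coeff.support = {c} :=
    Finsupp.support_single_ne_zero c one_ne_zero
  unfold Finsupp.sum
  rw [hsup]
  apply Finset.sum_congr rfl
  intro y _
  simp [MonoidAlgebra.coeff_single, Finsupp.single_apply]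


theorem main_aux (P : MonoidAlgebra K G) (c : G)
    (hcL : ∀ y ∈ P.coeff.support, ∀ x ∈ P.coeff.support, c * y = c * x → y = x)
    (hcR : ∀ y ∈ P.coeff.support, ∀ x ∈ P.coeff.support, y * c = x * c → y = x)
    (hsep : ∀ x ∈ P.coeff.support, ∀ y ∈ P.coeff.support, ¬ x * c = c * y)
    (hPne : P ≠ 0) (a b : K)
    (heq : a • (MonoidAlgebra.single c (1 : K) * P) +
      b • (P * MonoidAlgebra.single c (1 : K)) = 0) :
    a = 0 ∧ b = 0 := by
  have key : ∀ x ∈ P.coeff.support, a * P.coeff x = 0 ∧ b * P.coeff x = 0 := by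
    intro x hx
    constructor
    · have h0 := congrArg (fun Q : MonoidAlgebra K G => Q.coeff (c * x)) heq
      simp only [MonoidAlgebra.coeff_add, MonoidAlgebra.coeff_smul, MonoidAlgebra.coeff_zero, Finsupp.add_apply, Finsupp.smul_apply, smul_eq_mul, Finsupp.coe_zero,
        Pi.zero_apply] at h0
      have h1 : a * (∑ y ∈ P.coeff.support, if c * y = c * x then P.coeff y else 0) +
          b * (∑ y ∈ P.coeff.support, if y * c = c * x then P.coeff y else 0) = 0 := by
        rw [← single_one_mul_apply' K P c (c * x), ← mul_single_one_apply' K P c (c * x)]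
        exact h0
      have e1 : (∑ y ∈ P.coeff.support, if c * y = c * x then P.coeff y else 0) = P.coeff x := by
        rw [Finset.sum_congr rfl fun y hy => by
          rw [if_congr (iff_of_eq (propext ⟨fun h => hcL y hy x hx h, fun h => by rw [h]⟩))
            rfl rfl]]
        rw [Finset.sum_ite_eq' P.coeff.support x P.coeff]
        exact if_pos hx
      have e2 : (∑ y ∈ P.coeff.support, if y * c = c * x then P.coeff y else 0) = 0 :=
        Finset.sum_eq_zero fun y hy => if_neg (hsep y hy x hx)
      rw [e1, e2, mul_zero, add_zero] at h1
      exact h1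
    · have h0 := congrArg (fun Q : MonoidAlgebra K G => Q.coeff (x * c)) heq
      simp only [MonoidAlgebra.coeff_add, MonoidAlgebra.coeff_smul, MonoidAlgebra.coeff_zero, Finsupp.add_apply, Finsupp.smul_apply, smul_eq_mul, Finsupp.coe_zero,
        Pi.zero_apply] at h0
      have h1 : a * (∑ y ∈ P.coeff.support, if c * y = x * c then P.coeff y else 0) +
          b * (∑ y ∈ P.coeff.support, if y * c = x * c then P.coeff y else 0) = 0 := by
        rw [← single_one_mul_apply' K P c (x * c), ← mul_single_one_apply' K P c (x * c)]
        exact h0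
      have e1 : (∑ y ∈ P.coeff.support, if c * y = x * c then P.coeff y else 0) = 0 :=
        Finset.sum_eq_zero fun y hy => if_neg fun h => hsep x hx y hy h.symm
      have e2 : (∑ y ∈ P.coeff.support, if y * c = x * c then P.coeff y else 0) = P.coeff x := by
        rw [Finset.sum_congr rfl fun y hy => by
          rw [if_congr (iff_of_eq (propext ⟨fun h => hcR y hy x hx h, fun h => by rw [h]⟩))
            rfl rfl]]
        rw [Finset.sum_ite_eq' P.coeff.support x P.coeff]
        exact if_pos hx
      rw [e1, e2, mul_zero, zero_add] at h1
      exact h1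
  obtain ⟨x, hx⟩ := Finsupp.support_nonempty_iff.mpr (fun h => hPne (MonoidAlgebra.coeff_eq_zero.1 h))
  obtain ⟨ha, hb⟩ := key x hx
  have hPx : P.coeff x ≠ 0 := Finsupp.mem_support_iff.1 hx
  constructor
  · rcases mul_eq_zero.1 ha with h | h
    · exact h
    · exact absurd h hPx
  · rcases mul_eq_zero.1 hb with h | h
    · exact h
    · exact absurd h hPx

end

end F1PsiAux

namespace F1PsiAux
theorem main_thm (K : Type*) [Field K] (n : ℕ) (hn : 2 ≤ n)
    (Ψ : RingQuot (commRel K n))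
    (hmem : Ψ ∈ Submodule.span K
      {x : RingQuot (commRel K n) | ∃ l : List (Fin n),
        l.Perm ((List.finRange n).drop 1) ∧
        x = (l.map (fun i =>
          RingQuot.mkAlgHom K (commRel K n) (FreeAlgebra.ι K i))).prod})
    (hne : Ψ ≠ 0) :
    ∀ a b : K,
      a • (RingQuot.mkAlgHom K (commRel K n) (FreeAlgebra.ι K (⟨0, Nat.lt_of_lt_of_le Nat.zero_lt_two hn⟩ : Fin n)) * Ψ) +
        b • (Ψ * RingQuot.mkAlgHom K (commRel K n) (FreeAlgebra.ι K (⟨0, Nat.lt_of_lt_of_le Nat.zero_lt_two hn⟩ : Fin n))) = 0 →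
      a = 0 ∧ b = 0 := by
  classical
  intro a b heq
  set L : List (Fin n) := (List.finRange n).drop 1 with hL
  -- facts about L
  obtain ⟨m, rfl⟩ : ∃ m, n = m + 1 := ⟨n - 1, by omega⟩
  have hLmap : L = (List.finRange m).map Fin.succ := by
    rw [hL, List.finRange_succ]
    rfl
  have hLne0 : ∀ i ∈ L, (i : ℕ) ≠ 0 := by
    intro i hi
    rw [hLmap, List.mem_map] at hi
    obtain ⟨j, _, rfl⟩ := hi
    simp [Fin.val_succ]
  have h1L : (⟨1, by omega⟩ : Fin (m + 1)) ∈ L := by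
    rw [hLmap, List.mem_map]
    refine ⟨⟨0, by omega⟩, List.mem_finRange _, ?_⟩
    rfl
  -- `φ Ψ` and its support
  set e : Fin (m + 1) → RingQuot (commRel K (m + 1)) := fun i =>
    RingQuot.mkAlgHom K (commRel K (m + 1)) (FreeAlgebra.ι K i) with he
  have hφprod : ∀ l : List (Fin (m + 1)),
      φ K (m + 1) ((l.map e).prod) = MonoidAlgebra.single (cls l) 1 := by
    intro l
    rw [map_list_prod]
    have : (l.map e).map (φ K (m + 1)) =
        l.map fun i => MonoidAlgebra.of K (TM (m + 1)) (cls [i]) := by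
      rw [List.map_map]
      apply List.map_congr_left
      intro i _
      simp only [Function.comp_apply, he, φ_gen]
      rfl
    rw [this]
    have : (l.map fun i => MonoidAlgebra.of K (TM (m + 1)) (cls [i])) =
        (l.map fun i => cls (n := m + 1) [i]).map (MonoidAlgebra.of K (TM (m + 1))) := by
      rw [List.map_map]; rfl
    rw [this, ← map_list_prod (MonoidAlgebra.of K (TM (m + 1))), cls_prod]
    rfl
  set P : MonoidAlgebra K (TM (m + 1)) := φ K (m + 1) Ψ with hP
  have hPmem : P ∈ Submodule.span K
      {g : MonoidAlgebra K (TM (m + 1)) | ∃ l : List (Fin (m + 1)),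
        l.Perm L ∧ g = MonoidAlgebra.single (cls l) 1} := by
    have h1 := Submodule.apply_mem_span_image_of_mem_span
      (φ K (m + 1)).toLinearMap hmem
    refine Submodule.span_mono ?_ h1
    rintro g ⟨x, ⟨l, hlp, rfl⟩, rfl⟩
    exact ⟨l, hlp, by simpa using hφprod l⟩
  have hPsupp : ∀ x ∈ P.coeff.support, ∃ l : List (Fin (m + 1)), l.Perm L ∧ x = cls l := by
    have : ∀ Q ∈ Submodule.span K
        {g : MonoidAlgebra K (TM (m + 1)) | ∃ l : List (Fin (m + 1)),
          l.Perm L ∧ g = MonoidAlgebra.single (cls l) 1},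
        ∀ x ∈ (Q : MonoidAlgebra K (TM (m + 1))).coeff.support,
          ∃ l : List (Fin (m + 1)), l.Perm L ∧ x = cls l := by
      intro Q hQ
      induction hQ using Submodule.span_induction with
      | mem g hg =>
        obtain ⟨l, hlp, rfl⟩ := hg
        intro x hx
        have := Finsupp.support_single_subset hx
        simp only [Finset.mem_singleton] at this
        exact ⟨l, hlp, this⟩
      | zero => simp
      | add g h _ _ ihg ihh =>
        intro x hx
        rcases Finset.mem_union.1 (Finsupp.support_add hx) with h' | h'
        · exact ihg x h'
        · exact ihh x h'
      | smul c g _ ihg =>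
        intro x hx
        exact ihg x (Finsupp.support_smul hx)
    exact this P hPmem
  have hPne : P ≠ 0 := by
    intro h
    apply hne
    apply φ_inj K (m + 1)
    rw [← hP, h, map_zero]
  -- the central generator class
  set c0 : TM (m + 1) := cls [(⟨0, by omega⟩ : Fin (m + 1))] with hc0
  -- canceling and separating lemmas
  have hdP : ∀ x ∈ P.coeff.support, d x = x := by
    intro x hx
    obtain ⟨l, hlp, rfl⟩ := hPsupp x hx
    exact d_cls_of_ne l fun i hi => hLne0 i (hlp.mem_iff.mp hi)
  have hdc0 : d c0 = 1 := d_cls_zero (by omega)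
  have hsep : ∀ x ∈ P.coeff.support, ∀ y ∈ P.coeff.support, ¬ x * c0 = c0 * y := by
    intro x hx y hy hxy
    obtain ⟨l, hlp, rfl⟩ := hPsupp x hx
    obtain ⟨l', hlp', rfl⟩ := hPsupp y hy
    have hψ := congrArg (ψ (n := m + 1)) hxy
    rw [map_mul, map_mul, hc0, ψ_cls_zero,
      ψ_cls_of_ne l fun i hi => hLne0 i (hlp.mem_iff.mp hi),
      ψ_cls_of_ne l' fun i hi => hLne0 i (hlp'.mem_iff.mp hi)] at hψ
    have hkpos : 0 < List.countP (fun i : Fin (m + 1) => decide ((i : ℕ) = 1)) l := by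
      rw [List.countP_pos_iff]
      exact ⟨⟨1, by omega⟩, hlp.mem_iff.mpr h1L, by simp⟩
    obtain ⟨k, hk⟩ : ∃ k, List.countP (fun i : Fin (m + 1) => decide ((i : ℕ) = 1)) l
        = k + 1 := ⟨List.countP (fun i : Fin (m + 1) => decide ((i : ℕ) = 1)) l - 1, by omega⟩
    rw [hk] at hψ
    have := congrArg FreeMonoid.toList hψ
    simp only [FreeMonoid.toList_mul, FreeMonoid.toList_ofList, FreeMonoid.toList_of,
      List.replicate_succ] at this
    simp at this
  -- apply φ to the hypothesis
  have heq' : a • (MonoidAlgebra.single c0 (1:K) * P) +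
      b • (P * MonoidAlgebra.single c0 (1:K)) = 0 := by
    have := congrArg (φ K (m + 1)) heq
    rw [map_add, map_smul, map_smul, map_mul, map_mul, map_zero, φ_gen] at this
    exact this
  refine main_aux K P c0 ?_ ?_ hsep hPne a b heq'
  · intro y hy x hx h
    have := congrArg (d (n := m + 1)) h
    rwa [map_mul, map_mul, hdc0, one_mul, one_mul, hdP y hy, hdP x hx] at this
  · intro y hy x hx h
    have := congrArg (d (n := m + 1)) h
    rwa [map_mul, map_mul, hdc0, mul_one, mul_one, hdP y hy, hdP x hx] at this

end F1PsiAux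

/-- In the algebra on `F_1, …, F_n` modulo only the distant commutation relations, the
elements `F_1 Ψ` and `Ψ F_1` are linearly independent whenever `Ψ` is a nonzero linear
combination of Coxeter monomials in `F_2, …, F_n` (products in which each of
`F_2, …, F_n` appears exactly once). -/
theorem F1Psi_PsiF1_linearIndependent (K : Type*) [Field K] (n : ℕ) (hn : 2 ≤ n)
    (Ψ : RingQuot (commRel K n))
    (hmem : Ψ ∈ Submodule.span K
      {x : RingQuot (commRel K n) | ∃ l : List (Fin n),
        l.Perm ((List.finRange n).drop 1) ∧
        x = (l.map (fun i =>
          RingQuot.mkAlgHom K (commRel K n) (FreeAlgebra.ι K i))).prod})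
    (hne : Ψ ≠ 0) :
    ∀ a b : K,
      a • (RingQuot.mkAlgHom K (commRel K n) (FreeAlgebra.ι K (⟨0, by omega⟩ : Fin n)) * Ψ) +
        b • (Ψ * RingQuot.mkAlgHom K (commRel K n) (FreeAlgebra.ι K (⟨0, by omega⟩ : Fin n))) = 0 →
      a = 0 ∧ b = 0 :=
  F1PsiAux.main_thm K n hn Ψ hmem hne
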